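/- (Compatibility of transverse cones with the face partial order) Let F be a face of a convex polyhedral cone C in a Euclidean space. Then the set of faces of the transverse cone t(C,F) equals {t(G,F) : F ⪯ G ⪯ C}, i.e., every face of t(C,F) is of the form t(G,F) for a face G of C containing F, and conversely. -/

import Mathlib

/-- The closed convex polyhedral cone generated by vectors `v 0, …, v (n-1)`. -/
def polyCone {V : Type*} [AddCommGroup V] [Module ℝ V] {n : ℕ} (v : Fin n → V) : Set V :=
  {x | ∃ c : Fin n → ℝ, (∀ i, 0 ≤ c i) ∧ x = ∑ i, c i • v i}

/-- `C` is a (closed convex) polyhedral cone. -/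
def IsPolyCone {V : Type*} [AddCommGroup V] [Module ℝ V] (C : Set V) : Prop :=
  ∃ (n : ℕ) (v : Fin n → V), C = polyCone v

/-- `F` is a face of the cone `C` (cut out by a supporting linear functional). -/
def IsFace {V : Type*} [AddCommGroup V] [Module ℝ V] (C F : Set V) : Prop :=
  ∃ ℓ : V →ₗ[ℝ] ℝ, (∀ x ∈ C, ℓ x ≤ 0) ∧ F = {x ∈ C | ℓ x = 0}

variable {V : Type*} [NormedAddCommGroup V] [InnerProductSpace ℝ V] [FiniteDimensional ℝ V]

/-- The transverse cone `t(C,F)`: the image of `C` under the orthogonal projection onto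
the orthogonal complement of the linear span of `F`. -/
noncomputable def tCone (C F : Set V) : Set V :=
  (fun x => (Submodule.orthogonalProjectionOnto (Submodule.span ℝ F)ᗮ x : V)) '' C

/-- compatibility of transverse cones with the face partial order: the
faces of the transverse cone `t(C,F)` are exactly the cones `t(G,F)` for faces `G` of `C`
containing `F`. -/
theorem faces_of_tCone (C F : Set V) (hC : IsPolyCone C) (hF : IsFace C F) :
    ∀ H : Set V, IsFace (tCone C F) H ↔
      ∃ G : Set V, IsFace C G ∧ IsFace G F ∧ H = tCone G F := by
  obtain ⟨ℓ, hℓC, hFeq⟩ := hF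
  set W : Submodule ℝ V := (Submodule.span ℝ F)ᗮ with hW
  set P : V →ₗ[ℝ] V := W.subtype ∘ₗ (Submodule.orthogonalProjectionOnto W).toLinearMap with hPdef
  have hPx : ∀ x, P x = ((Submodule.orthogonalProjectionOnto W x : V)) := fun x => rfl
  have htC : ∀ S : Set V, tCone S F = P '' S := fun S => rfl
  -- if a functional vanishes on F, it is unchanged by P
  have hproj : ∀ (m : V →ₗ[ℝ] ℝ), (∀ x ∈ F, m x = 0) → ∀ x, m (P x) = m x := by
    intro m hm x
    have hker : Submodule.span ℝ F ≤ LinearMap.ker m := Submodule.span_le.mpr hm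
    have hx : x - P x ∈ Submodule.span ℝ F := by
      have h1 : x - P x ∈ ((Submodule.span ℝ F)ᗮ)ᗮ :=
        Submodule.sub_starProjection_mem_orthogonal (K := W) x
      rwa [Submodule.orthogonal_orthogonal] at h1
    have h0 : m (x - P x) = 0 := hker hx
    have := h0
    rw [map_sub, sub_eq_zero] at this
    exact this.symm
  -- P vanishes on F
  have hPF : ∀ x ∈ F, P x = 0 := by
    intro x hx
    rw [hPx]
    have : Submodule.orthogonalProjectionOnto W x = 0 :=
      Submodule.orthogonalProjectionOnto_apply_of_mem_orthogonal
        ((Submodule.span ℝ F).le_orthogonal_orthogonal (Submodule.subset_span hx))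
    rw [this]; rfl
  intro H
  constructor
  · rintro ⟨k, hk, hH⟩
    refine ⟨{x ∈ C | k (P x) = 0}, ⟨k ∘ₗ P, ?_, rfl⟩, ⟨ℓ, ?_, ?_⟩, ?_⟩
    · intro x hx
      exact hk (P x) ⟨x, hx, rfl⟩
    · intro x hx
      exact hℓC x hx.1
    · ext x
      constructor
      · intro hx
        have hxC : x ∈ C ∧ ℓ x = 0 := by rw [hFeq] at hx; exact hx
        refine ⟨⟨hxC.1, ?_⟩, hxC.2⟩
        rw [hPF x hx, map_zero]
      · rintro ⟨⟨hxC, -⟩, hℓx⟩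
        rw [hFeq]; exact ⟨hxC, hℓx⟩
    · rw [htC]
      ext y
      constructor
      · intro hy
        have hy' : y ∈ tCone C F ∧ k y = 0 := by rw [hH] at hy; exact hy
        obtain ⟨⟨x, hxC, rfl⟩, hky⟩ := hy'
        exact ⟨x, ⟨hxC, hky⟩, rfl⟩
      · rintro ⟨x, ⟨hxC, hkx⟩, rfl⟩
        rw [hH]
        exact ⟨⟨x, hxC, rfl⟩, hkx⟩
  · rintro ⟨G, ⟨m, hmC, hGeq⟩, ⟨ℓ', hℓ'G, hFeq'⟩, rfl⟩
    have hFG : ∀ x ∈ F, m x = 0 := by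
      intro x hx
      rw [hFeq'] at hx
      have : x ∈ G := hx.1
      rw [hGeq] at this
      exact this.2
    have hm := hproj m hFG
    refine ⟨m, ?_, ?_⟩
    · rintro y ⟨x, hxC, rfl⟩
      have : m ((Submodule.orthogonalProjectionOnto W x : V)) = m x := hm x
      rw [this]
      exact hmC x hxC
    · rw [htC, htC]
      ext y
      constructor
      · rintro ⟨x, hxG, rfl⟩
        have hxC : x ∈ C ∧ m x = 0 := by rw [hGeq] at hxG; exact hxG
        exact ⟨⟨x, hxC.1, rfl⟩, by rw [hm x]; exact hxC.2⟩
      · rintro ⟨⟨x, hxC, rfl⟩, hmy⟩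
        rw [hm x] at hmy
        exact ⟨x, by rw [hGeq]; exact ⟨hxC, hmy⟩, rfl⟩
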